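/- Let U be a ‖·‖₂-ball of radius r around 0 in sp₂(H) on which exp is injective. If g ∈ U₂(H_J) (i.e. g is unitary, commutes with J, and g - 1 is Hilbert-Schmidt) and g = e^y for some y ∈ U, then y* = -y; consequently exp(sp₂(H)_{ah} ∩ U) = U₂(H_J) ∩ exp(U). -/

import Mathlib

open scoped RealInnerProductSpace
open ContinuousLinearMap

noncomputable section

variable {ι H : Type*} [NormedAddCommGroup H] [InnerProductSpace ℝ H] [CompleteSpace H]

/-- `x` is a Hilbert-Schmidt operator (with respect to the Hilbert basis `b`). -/
def IsHS (b : HilbertBasis ι ℝ H) (x : H →L[ℝ] H) : Prop :=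
  Summable fun i => ‖x (b i)‖ ^ 2

/-- The Hilbert-Schmidt norm `‖x‖₂`. -/
def hsNorm (b : HilbertBasis ι ℝ H) (x : H →L[ℝ] H) : ℝ :=
  Real.sqrt (∑' i, ‖x (b i)‖ ^ 2)

/-- The trace inner product `⟨x, y⟩ = Tr (y* x)`. -/
def hsInner (b : HilbertBasis ι ℝ H) (x y : H →L[ℝ] H) : ℝ :=
  ∑' i, ⟪x (b i), y (b i)⟫

/-- `J` is a complex structure: `J² = -1` and `J* = -J`. -/
def IsCplxStruct (J : H →L[ℝ] H) : Prop :=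
  J * J = -1 ∧ star J = -J

/-- The symplectic group `Sp(H)`. -/
def Sp (J : H →L[ℝ] H) : Set (H →L[ℝ] H) :=
  {g | IsUnit g ∧ star g * J * g = J}

/-- The restricted symplectic group `Sp₂(H)`. -/
def Sp2 (b : HilbertBasis ι ℝ H) (J : H →L[ℝ] H) : Set (H →L[ℝ] H) :=
  {g | g ∈ Sp J ∧ IsHS b (g - 1)}

/-- The Banach-Lie algebra `sp₂(H) = {x ∈ B₂(H) : xJ = -Jx*}`. -/
def sp2 (b : HilbertBasis ι ℝ H) (J : H →L[ℝ] H) : Set (H →L[ℝ] H) :=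
  {x | IsHS b x ∧ x * J = -(J * star x)}

/-- The Hermitian part of `sp₂(H)`. -/
def sp2h (b : HilbertBasis ι ℝ H) (J : H →L[ℝ] H) : Set (H →L[ℝ] H) :=
  {x ∈ sp2 b J | IsSelfAdjoint x}

/-- The anti-Hermitian part of `sp₂(H)`. -/
def sp2ah (b : HilbertBasis ι ℝ H) (J : H →L[ℝ] H) : Set (H →L[ℝ] H) :=
  {x ∈ sp2 b J | star x = -x}

/-- The positive part `Sp₂⁺(H)` of the restricted symplectic group. -/
def Sp2pos (b : HilbertBasis ι ℝ H) (J : H →L[ℝ] H) : Set (H →L[ℝ] H) :=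
  {g ∈ Sp2 b J | g.IsPositive}

/-- The restricted unitary group `U₂(H_J)` of unitaries commuting with `J` which are
Hilbert-Schmidt perturbations of the identity. -/
def U2J (b : HilbertBasis ι ℝ H) (J : H →L[ℝ] H) : Set (H →L[ℝ] H) :=
  {u | star u * u = 1 ∧ u * star u = 1 ∧ u * J = J * u ∧ IsHS b (u - 1)}

open scoped Classical in
/-- The positive square root `a^{1/2}` of a positive operator (junk value otherwise). -/
def psqrt (a : H →L[ℝ] H) : H →L[ℝ] H :=
  if h : ∃ s : H →L[ℝ] H, s.IsPositive ∧ s * s = a then h.choose else 0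

/-- A piecewise smooth curve parametrized on `[0,1]`. -/
def PiecewiseSmooth (α : ℝ → (H →L[ℝ] H)) : Prop :=
  ContinuousOn α (Set.Icc 0 1) ∧ ∃ n : ℕ, ∃ t : Fin (n + 1) → ℝ,
    StrictMono t ∧ t 0 = 0 ∧ t (Fin.last n) = 1 ∧
    ∀ i : Fin n, ContDiffOn ℝ 1 α (Set.Icc (t i.castSucc) (t i.succ))

/-- Length of a curve with respect to a metric `F` on tangent vectors. -/
def lengthWith (F : (H →L[ℝ] H) → (H →L[ℝ] H) → ℝ) (α : ℝ → (H →L[ℝ] H)) : ℝ :=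
  ∫ t in (0:ℝ)..1, F (α t) (deriv α t)

/-- Piecewise smooth curves inside `S` joining `p` to `q`. -/
def pathsIn (S : Set (H →L[ℝ] H)) (p q : H →L[ℝ] H) : Set (ℝ → (H →L[ℝ] H)) :=
  {α | PiecewiseSmooth α ∧ (∀ t ∈ Set.Icc (0:ℝ) 1, α t ∈ S) ∧ α 0 = p ∧ α 1 = q}

/-- The geodesic distance in `S` associated to the metric `F`. -/
def gdist (S : Set (H →L[ℝ] H)) (F : (H →L[ℝ] H) → (H →L[ℝ] H) → ℝ)
    (p q : H →L[ℝ] H) : ℝ :=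
  sInf (lengthWith F '' pathsIn S p q)

/-- The left invariant metric `I(g,v) = ‖g⁻¹ v‖₂`. -/
def leftMet (b : HilbertBasis ι ℝ H) : (H →L[ℝ] H) → (H →L[ℝ] H) → ℝ :=
  fun g v => hsNorm b (Ring.inverse g * v)

/-- The metric of positive operators `𝔭(a,x) = ‖a^{-1/2} x a^{-1/2}‖₂`. -/
def posMet (b : HilbertBasis ι ℝ H) : (H →L[ℝ] H) → (H →L[ℝ] H) → ℝ :=
  fun a x => hsNorm b (Ring.inverse (psqrt a) * x * Ring.inverse (psqrt a))

/-- The ambient metric `𝔭_amb(g,x) = ‖x‖₂`. -/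
def ambMet (b : HilbertBasis ι ℝ H) : (H →L[ℝ] H) → (H →L[ℝ] H) → ℝ :=
  fun _ x => hsNorm b x



section HSHelpers

variable {ι H : Type*} [NormedAddCommGroup H] [InnerProductSpace ℝ H] [CompleteSpace H]

omit [CompleteSpace H] in
private lemma parseval_ofReal (b : HilbertBasis ι ℝ H) (v : H) :
    ∑' j, ENNReal.ofReal (⟪v, b j⟫ ^ 2) = ENNReal.ofReal (‖v‖ ^ 2) := by
  have h : HasSum (fun j => ⟪v, b j⟫ ^ 2) (‖v‖ ^ 2) := by
    have h0 := b.hasSum_inner_mul_inner v v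
    rw [real_inner_self_eq_norm_sq] at h0
    have hfun : (fun j => ⟪v, b j⟫ ^ 2) = fun i => ⟪v, b i⟫ * ⟪b i, v⟫ := by
      funext j
      rw [sq, real_inner_comm]
    rw [hfun]; exact h0
  rw [← h.tsum_eq, ENNReal.ofReal_tsum_of_nonneg (fun j => sq_nonneg _) h.summable]

private lemma tsum_star_ofReal (b : HilbertBasis ι ℝ H) (x : H →L[ℝ] H) :
    ∑' i, ENNReal.ofReal (‖(star x) (b i)‖ ^ 2) = ∑' i, ENNReal.ofReal (‖x (b i)‖ ^ 2) := by
  have hadj : ∀ i j, ⟪(star x) (b i), b j⟫ = ⟪x (b j), b i⟫ := by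
    intro i j
    rw [ContinuousLinearMap.star_eq_adjoint, ContinuousLinearMap.adjoint_inner_left]
    exact real_inner_comm _ _
  calc ∑' i, ENNReal.ofReal (‖(star x) (b i)‖ ^ 2)
      = ∑' i, ∑' j, ENNReal.ofReal (⟪(star x) (b i), b j⟫ ^ 2) :=
        tsum_congr fun i => (parseval_ofReal b _).symm
    _ = ∑' i, ∑' j, ENNReal.ofReal (⟪x (b j), b i⟫ ^ 2) := by
        simp_rw [hadj]
    _ = ∑' j, ∑' i, ENNReal.ofReal (⟪x (b j), b i⟫ ^ 2) := ENNReal.tsum_comm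
    _ = ∑' j, ENNReal.ofReal (‖x (b j)‖ ^ 2) :=
        tsum_congr fun j => parseval_ofReal b _

omit [InnerProductSpace ℝ H] [CompleteSpace H] in
private lemma summable_norm_sq_iff (f : ι → H) :
    Summable (fun i => ‖f i‖ ^ 2) ↔ ∑' i, ENNReal.ofReal (‖f i‖ ^ 2) ≠ ⊤ := by
  have h1 : ∀ i, ENNReal.ofReal (‖f i‖ ^ 2) = ((‖f i‖₊ ^ 2 : NNReal) : ENNReal) := by
    intro i
    rw [← ENNReal.ofReal_coe_nnreal]
    congr 1
  have h2 : (fun i => ‖f i‖ ^ 2) = fun i => ((‖f i‖₊ ^ 2 : NNReal) : ℝ) := by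
    funext i; simp [NNReal.coe_pow]
  rw [h2, NNReal.summable_coe, tsum_congr h1, ENNReal.tsum_coe_ne_top_iff_summable]

omit [InnerProductSpace ℝ H] [CompleteSpace H] in
private lemma tsum_norm_sq_eq (f : ι → H) (hf : Summable (fun i => ‖f i‖ ^ 2)) :
    ∑' i, ‖f i‖ ^ 2 = (∑' i, ENNReal.ofReal (‖f i‖ ^ 2)).toReal := by
  rw [← ENNReal.ofReal_tsum_of_nonneg (fun i => sq_nonneg _) hf,
    ENNReal.toReal_ofReal (tsum_nonneg fun i => sq_nonneg _)]

private lemma isHS_star_iff (b : HilbertBasis ι ℝ H) (x : H →L[ℝ] H) :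
    IsHS b (star x) ↔ IsHS b x := by
  unfold IsHS
  rw [summable_norm_sq_iff, summable_norm_sq_iff, tsum_star_ofReal]

private lemma hsNorm_star (b : HilbertBasis ι ℝ H) (x : H →L[ℝ] H) :
    hsNorm b (star x) = hsNorm b x := by
  unfold hsNorm
  congr 1
  by_cases hx : IsHS b x
  · rw [tsum_norm_sq_eq _ hx, tsum_norm_sq_eq _ ((isHS_star_iff b x).2 hx), tsum_star_ofReal]
  · rw [tsum_eq_zero_of_not_summable hx,
      tsum_eq_zero_of_not_summable (fun h => hx ((isHS_star_iff b x).1 h))]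

private lemma IsHS.const_mul (b : HilbertBasis ι ℝ H) {x : H →L[ℝ] H} (c : H →L[ℝ] H)
    (hx : IsHS b x) : IsHS b (c * x) := by
  refine Summable.of_nonneg_of_le (fun i => sq_nonneg _) (fun i => ?_)
    (hx.mul_left (‖c‖ ^ 2))
  calc ‖(c * x) (b i)‖ ^ 2 ≤ (‖c‖ * ‖x (b i)‖) ^ 2 := by
        rw [ContinuousLinearMap.mul_apply]
        exact pow_le_pow_left₀ (norm_nonneg _) (c.le_opNorm _) 2
    _ = ‖c‖ ^ 2 * ‖x (b i)‖ ^ 2 := mul_pow _ _ 2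

private lemma exp_sub_one_factor (y : H →L[ℝ] H) :
    ∃ c : H →L[ℝ] H, NormedSpace.exp y - 1 = c * y := by
  set f : ℕ → (H →L[ℝ] H) := fun n => ((Nat.factorial (n + 1) : ℝ))⁻¹ • y ^ n with hf
  have hs : Summable f := by
    apply Summable.of_norm
    refine Summable.of_nonneg_of_le (fun n => norm_nonneg _) (fun n => ?_)
      (NormedSpace.norm_expSeries_summable' (𝕂 := ℝ) y)
    simp only [hf]
    refine le_trans (norm_smul_le ((Nat.factorial (n + 1) : ℝ))⁻¹ (y ^ n)) ?_
    rw [norm_smul]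
    apply mul_le_mul_of_nonneg_right ?_ (norm_nonneg _)
    rw [Real.norm_eq_abs, Real.norm_eq_abs, abs_of_nonneg (by positivity),
      abs_of_nonneg (by positivity)]
    apply inv_anti₀ (by positivity)
    exact_mod_cast Nat.factorial_le (Nat.le_succ n)
  refine ⟨∑' n, f n, ?_⟩
  have hsum : Summable (fun n : ℕ => ((Nat.factorial n : ℝ))⁻¹ • y ^ n) :=
    NormedSpace.expSeries_summable' y
  simp only [NormedSpace.exp_eq_tsum ℝ]
  rw [hsum.tsum_eq_zero_add]
  simp only [pow_zero, Nat.factorial_zero, Nat.cast_one, inv_one, one_smul]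
  rw [add_sub_cancel_left, ← hs.tsum_mul_right y]
  exact tsum_congr fun n => by rw [hf]; simp [smul_mul_assoc, ← pow_succ]

end HSHelpers

/-- on a ball `U` where `exp` is injective, a unitary `g = e^y ∈ U₂(H_J)`
with `y ∈ U` forces `y* = -y`, and `exp (sp₂(H)_{ah} ∩ U) = U₂(H_J) ∩ exp U`. -/
theorem exp_sp2ah_eq_U2J_inter (b : HilbertBasis ι ℝ H) (J : H →L[ℝ] H)
    (hJ : IsCplxStruct J) (r : ℝ) (U : Set (H →L[ℝ] H))
    (hU : U = {x ∈ sp2 b J | hsNorm b x < r})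
    (hinj : Set.InjOn (NormedSpace.exp) U) :
    (∀ g ∈ U2J b J, ∀ y ∈ U, g = NormedSpace.exp y → star y = -y) ∧
    NormedSpace.exp '' (sp2ah b J ∩ U) = U2J b J ∩ NormedSpace.exp '' U := by
  obtain ⟨hJ2, _hJs⟩ := hJ
  have hstar_eq : ∀ y ∈ sp2 b J, star y = J * y * J := by
    intro y hy
    have h2 : J * (y * J) = J * (-(J * star y)) := congrArg (J * ·) hy.2
    have h3 : J * (y * J) = star y := by
      rw [h2]
      calc J * -(J * star y) = -(J * J) * star y := by noncomm_ring
        _ = star y := by rw [hJ2]; noncomm_ring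
    rw [← h3, mul_assoc]
  have hstar_sp2 : ∀ y ∈ sp2 b J, star y ∈ sp2 b J := by
    intro y hy
    refine ⟨(isHS_star_iff b y).2 hy.1, ?_⟩
    rw [star_star, hstar_eq y hy]
    calc J * y * J * J = J * y * (J * J) := by rw [mul_assoc]
      _ = -(J * y) := by rw [hJ2]; noncomm_ring
  have hstarU : ∀ y ∈ U, star y ∈ U := by
    intro y hy
    rw [hU] at hy ⊢
    exact ⟨hstar_sp2 y hy.1, by rw [hsNorm_star]; exact hy.2⟩
  have hnegU : ∀ y ∈ U, -y ∈ U := by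
    intro y hy
    rw [hU] at hy ⊢
    refine ⟨⟨?_, ?_⟩, ?_⟩
    · have h := hy.1.1
      unfold IsHS at h ⊢
      simpa [ContinuousLinearMap.neg_apply] using h
    · rw [star_neg]
      calc -y * J = -(y * J) := by noncomm_ring
        _ = -(-(J * star y)) := by rw [hy.1.2]
        _ = -(J * -star y) := by noncomm_ring
    · have h : hsNorm b (-y) = hsNorm b y := by
        unfold hsNorm
        congr 1
        exact tsum_congr fun i => by simp [ContinuousLinearMap.neg_apply]
      rw [h]; exact hy.2
  have key : ∀ g ∈ U2J b J, ∀ y ∈ U, g = NormedSpace.exp y → star y = -y := by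
    intro g hg y hy hgy
    obtain ⟨hg1, _hg2, _hgJ, _hgHS⟩ := hg
    have hexpneg : g * NormedSpace.exp (-y) = 1 := by
      let +nondep : NormedAlgebra ℚ (H →L[ℝ] H) := .restrictScalars ℚ ℝ (H →L[ℝ] H)
      rw [hgy, ← NormedSpace.exp_add_of_commute (Commute.neg_right (Commute.refl y)),
        add_neg_cancel, NormedSpace.exp_zero]
    have h1 : NormedSpace.exp (star y) = NormedSpace.exp (-y) := by
      calc NormedSpace.exp (star y) = star g := by rw [hgy, NormedSpace.star_exp]
        _ = star g * (g * NormedSpace.exp (-y)) := by rw [hexpneg, mul_one]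
        _ = (star g * g) * NormedSpace.exp (-y) := by rw [mul_assoc]
        _ = NormedSpace.exp (-y) := by rw [hg1, one_mul]
    exact hinj (hstarU y hy) (hnegU y hy) h1
  refine ⟨key, ?_⟩
  ext g
  constructor
  · rintro ⟨y, ⟨⟨hysp2, hyah⟩, hyU⟩, rfl⟩
    have hse : star (NormedSpace.exp y) = NormedSpace.exp (-y) := by
      rw [NormedSpace.star_exp, hyah]
    have hyJ : Commute y J := by
      have h : y * J = J * y := by
        have h0 := hysp2.2
        rw [hyah] at h0
        calc y * J = -(J * -y) := h0
          _ = J * y := by noncomm_ring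
      exact h
    refine ⟨⟨?_, ?_, ?_, ?_⟩, ⟨y, hyU, rfl⟩⟩
    · let +nondep : NormedAlgebra ℚ (H →L[ℝ] H) := .restrictScalars ℚ ℝ (H →L[ℝ] H)
      rw [hse, ← NormedSpace.exp_add_of_commute (Commute.neg_left (Commute.refl y)),
        neg_add_cancel, NormedSpace.exp_zero]
    · let +nondep : NormedAlgebra ℚ (H →L[ℝ] H) := .restrictScalars ℚ ℝ (H →L[ℝ] H)
      rw [hse, ← NormedSpace.exp_add_of_commute (Commute.neg_right (Commute.refl y)),
        add_neg_cancel, NormedSpace.exp_zero]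
    · exact hyJ.exp_left
    · obtain ⟨c, hc⟩ := exp_sub_one_factor y
      rw [hc]
      exact IsHS.const_mul b c hysp2.1
  · rintro ⟨hg, y, hyU, rfl⟩
    have h := key _ hg y hyU rfl
    refine ⟨y, ⟨⟨?_, h⟩, hyU⟩, rfl⟩
    rw [hU] at hyU
    exact hyU.1


end
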